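/- For N ≥ 3, the number of monomials x_p x_q x_r x_s (with p < q < r < s in {1,…,N}) appearing with nonzero coefficient in the multilinear expansion of f^bern_N is Θ(N³); in particular, a quadruple p < q < r < s corresponds to a nonzero degree-4 monomial if and only if p + s = q + r, and the number of such quadruples is at least ⌊N/4⌋·⌊N/4⌋·(⌊N/4⌋ - 1). -/

import Mathlib

open Finset

/-- The set of binary vectors in `ℝ^n`. -/
def IsBinary {n : ℕ} (x : Fin n → ℝ) : Prop := ∀ i, x i = 0 ∨ x i = 1

/-- Extend a vector `x ∈ ℝ^N` to a function on `ℕ` by zero. -/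
def ext {N : ℕ} (x : Fin N → ℝ) (i : ℕ) : ℝ := if h : i < N then x ⟨i, h⟩ else 0

/-- The Bernasconi objective function on `{0,1}^N`. -/
def fbern (N : ℕ) : (Fin N → ℝ) → ℝ := fun x =>
  ∑ d ∈ Finset.Icc 1 (N - 1),
    (∑ i ∈ Finset.range (N - d), (2 * ext x i - 1) * (2 * ext x (i + d) - 1)) ^ 2

/-- The quadruples `p < q < r < s` with `p + s = q + r`. -/
def goodQuads (N : ℕ) : Finset (Fin N × Fin N × Fin N × Fin N) :=
  Finset.univ.filter (fun t => t.1 < t.2.1 ∧ t.2.1 < t.2.2.1 ∧ t.2.2.1 < t.2.2.2 ∧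
    (t.1 : ℕ) + (t.2.2.2 : ℕ) = (t.2.1 : ℕ) + (t.2.2.1 : ℕ))

private def chi {N : ℕ} (J : Finset (Fin N)) : Fin N → ℝ := fun i => if i ∈ J then 1 else 0

private lemma isBinary_chi {N : ℕ} (J : Finset (Fin N)) : IsBinary (chi J) := by
  intro i; unfold chi; split_ifs <;> simp

/-- alternating-sum / product identity -/
private lemma alt_prod {N : ℕ} (I : Finset (Fin N)) (u : Fin N → ℝ) :
    ∑ J ∈ I.powerset, (-1 : ℝ) ^ ((I \ J).card) * ∏ j ∈ J, u j = ∏ j ∈ I, (u j - 1) := by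
  have := Finset.prod_add u (fun _ => (-1 : ℝ)) I
  simp only [Finset.prod_const] at this
  rw [show (fun j => u j - 1) = fun j => u j + (-1) by funext j; ring]
  rw [this]
  exact Finset.sum_congr rfl fun J hJ => by ring

/-- Möbius inversion for multilinear coefficients -/
private lemma inversion {N : ℕ} (c : Finset (Fin N) → ℝ)
    (hc : ∀ x : Fin N → ℝ, IsBinary x →
      fbern N x = ∑ I : Finset (Fin N), c I * ∏ i ∈ I, x i)
    (I : Finset (Fin N)) :
    c I = ∑ J ∈ I.powerset, (-1 : ℝ) ^ ((I \ J).card) * fbern N (chi J) := by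
  symm
  have hval : ∀ J : Finset (Fin N), fbern N (chi J) = ∑ K ∈ J.powerset, c K := by
    intro J
    rw [hc _ (isBinary_chi J)]
    have : ∀ K : Finset (Fin N), (∏ i ∈ K, chi J i) = if K ⊆ J then (1:ℝ) else 0 := by
      intro K
      unfold chi
      rw [Finset.prod_boole]
      congr 1
    calc ∑ K : Finset (Fin N), c K * ∏ i ∈ K, chi J i
        = ∑ K : Finset (Fin N), if K ⊆ J then c K else 0 := by
          refine Finset.sum_congr rfl fun K _ => ?_
          rw [this K]; split_ifs <;> ring
      _ = ∑ K ∈ Finset.univ.filter (· ⊆ J), c K := by rw [Finset.sum_filter]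
      _ = ∑ K ∈ J.powerset, c K := by
          refine Finset.sum_congr ?_ fun _ _ => rfl
          ext K; simp [Finset.mem_powerset]
  calc ∑ J ∈ I.powerset, (-1 : ℝ) ^ ((I \ J).card) * fbern N (chi J)
      = ∑ J ∈ I.powerset, ∑ K ∈ J.powerset, (-1 : ℝ) ^ ((I \ J).card) * c K := by
        refine Finset.sum_congr rfl fun J _ => ?_
        rw [hval J, Finset.mul_sum]
    _ = ∑ J ∈ I.powerset, ∑ K : Finset (Fin N),
          (-1 : ℝ) ^ ((I \ J).card) * (if K ⊆ J then c K else 0) := by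
        refine Finset.sum_congr rfl fun J _ => ?_
        rw [← Finset.mul_sum, ← Finset.mul_sum]
        congr 1
        rw [← Finset.sum_filter]
        refine Finset.sum_congr ?_ fun _ _ => rfl
        ext K; simp [Finset.mem_powerset]
    _ = ∑ K : Finset (Fin N), ∑ J ∈ I.powerset,
          (-1 : ℝ) ^ ((I \ J).card) * (if K ⊆ J then c K else 0) := Finset.sum_comm
    _ = ∑ K : Finset (Fin N), (if K = I then (1:ℝ) else 0) * c K := by
        refine Finset.sum_congr rfl fun K _ => ?_
        by_cases hKI : K ⊆ I
        · have key : ∀ J ∈ I.powerset, (-1 : ℝ) ^ ((I \ J).card) * (if K ⊆ J then c K else 0)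
              = ((∏ j ∈ J, (1:ℝ)) * ∏ j ∈ I \ J, (if j ∈ K then 0 else -1)) * c K := by
            intro J hJ
            rw [Finset.mem_powerset] at hJ
            by_cases hKJ : K ⊆ J
            · rw [if_pos hKJ]
              have : ∏ j ∈ I \ J, (if j ∈ K then (0:ℝ) else -1) = ∏ j ∈ I \ J, (-1:ℝ) := by
                refine Finset.prod_congr rfl fun j hj => ?_
                rw [Finset.mem_sdiff] at hj
                rw [if_neg (fun hjK => hj.2 (hKJ hjK))]
              rw [this]
              simp [Finset.prod_const]
            · rw [if_neg hKJ]
              obtain ⟨x, hxK, hxJ⟩ := Finset.not_subset.mp hKJ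
              have hxI : x ∈ I \ J := Finset.mem_sdiff.mpr ⟨hKI hxK, hxJ⟩
              rw [Finset.prod_eq_zero hxI (by rw [if_pos hxK])]
              ring
          rw [Finset.sum_congr rfl key, ← Finset.sum_mul, ← Finset.prod_add]
          have : ∏ j ∈ I, ((1:ℝ) + if j ∈ K then 0 else -1)
              = ∏ j ∈ I, (if j ∈ K then (1:ℝ) else 0) := by
            refine Finset.prod_congr rfl fun j _ => ?_
            split_ifs <;> ring
          rw [this, Finset.prod_boole]
          have : (∀ j ∈ I, j ∈ K) ↔ K = I := by
            constructor
            · intro h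
              exact Finset.Subset.antisymm hKI (fun j hj => h j hj)
            · rintro rfl; exact fun j hj => hj
          simp only [this]
        · have hKnI : K ≠ I := fun h => hKI (h ▸ Finset.Subset.refl I)
          rw [if_neg hKnI]
          rw [Finset.sum_eq_zero, zero_mul]
          intro J hJ
          rw [Finset.mem_powerset] at hJ
          rw [if_neg (fun h => hKI (h.trans hJ)), mul_zero]
    _ = c I := by simp

private lemma sig {N : ℕ} (J : Finset (Fin N)) (k : ℕ) (hk : k < N) :
    2 * _root_.ext (chi J) k - 1 = -∏ j ∈ J, (if (j : ℕ) = k then (-1 : ℝ) else 1) := by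
  unfold _root_.ext chi
  rw [dif_pos hk]
  have : ∀ j ∈ J, (if (j : ℕ) = k then (-1 : ℝ) else 1)
      = if j = (⟨k, hk⟩ : Fin N) then -1 else 1 := by
    intro j _; congr 1; simp [Fin.ext_iff]
  rw [Finset.prod_congr rfl this, Finset.prod_ite_eq' J (⟨k, hk⟩ : Fin N) (fun _ => (-1 : ℝ))]
  split_ifs <;> norm_num

private lemma A_eval {N : ℕ} (I : Finset (Fin N)) (a b c e : ℕ)
    (ha : a < N) (hb : b < N) (hcn : c < N) (he : e < N) :
    ∑ J ∈ I.powerset, (-1 : ℝ) ^ ((I \ J).card) *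
      ((2 * _root_.ext (chi J) a - 1) * (2 * _root_.ext (chi J) b - 1) *
       ((2 * _root_.ext (chi J) c - 1) * (2 * _root_.ext (chi J) e - 1)))
    = ∏ j ∈ I, ((if (j : ℕ) = a then (-1 : ℝ) else 1) * (if (j : ℕ) = b then (-1 : ℝ) else 1) *
        ((if (j : ℕ) = c then (-1 : ℝ) else 1) * (if (j : ℕ) = e then (-1 : ℝ) else 1)) - 1) := by
  rw [← alt_prod]
  refine Finset.sum_congr rfl fun J hJ => ?_
  rw [sig J a ha, sig J b hb, sig J c hcn, sig J e he]
  rw [show (-∏ j ∈ J, (if (j : ℕ) = a then (-1 : ℝ) else 1)) *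
        (-∏ j ∈ J, (if (j : ℕ) = b then (-1 : ℝ) else 1)) *
        ((-∏ j ∈ J, (if (j : ℕ) = c then (-1 : ℝ) else 1)) *
         (-∏ j ∈ J, (if (j : ℕ) = e then (-1 : ℝ) else 1)))
      = ((∏ j ∈ J, (if (j : ℕ) = a then (-1 : ℝ) else 1)) *
         ∏ j ∈ J, (if (j : ℕ) = b then (-1 : ℝ) else 1)) *
        ((∏ j ∈ J, (if (j : ℕ) = c then (-1 : ℝ) else 1)) *
         ∏ j ∈ J, (if (j : ℕ) = e then (-1 : ℝ) else 1)) from by ring]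
  rw [← Finset.prod_mul_distrib, ← Finset.prod_mul_distrib, ← Finset.prod_mul_distrib]

private def cnt4 (a b c e x : ℕ) : ℕ :=
  (if x = a then 1 else 0) + (if x = b then 1 else 0) +
  (if x = c then 1 else 0) + (if x = e then 1 else 0)

private lemma u_eq (a b c e x : ℕ) :
    (if x = a then (-1 : ℝ) else 1) * (if x = b then (-1 : ℝ) else 1) *
      ((if x = c then (-1 : ℝ) else 1) * (if x = e then (-1 : ℝ) else 1))
    = (-1) ^ (cnt4 a b c e x) := by
  simp only [cnt4]; split_ifs <;> norm_num

set_option maxHeartbeats 2000000 in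
private lemma classify {N : ℕ} (p q r s : Fin N) (hpq : p < q) (hqr : q < r) (hrs : r < s)
    (d i i' : ℕ) (hd : 1 ≤ d) (hi : i + d < N) (hi' : i' + d < N) :
    (∏ j ∈ ({p, q, r, s} : Finset (Fin N)),
      ((if (j : ℕ) = i then (-1 : ℝ) else 1) * (if (j : ℕ) = i + d then (-1 : ℝ) else 1) *
        ((if (j : ℕ) = i' then (-1 : ℝ) else 1) * (if (j : ℕ) = i' + d then (-1 : ℝ) else 1)) - 1))
    = if (p : ℕ) + (s : ℕ) = (q : ℕ) + (r : ℕ) then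
        ((if d = (q : ℕ) - (p : ℕ) ∧ i = (p : ℕ) ∧ i' = (r : ℕ) then 16 else 0) +
         (if d = (q : ℕ) - (p : ℕ) ∧ i = (r : ℕ) ∧ i' = (p : ℕ) then 16 else 0) +
         (if d = (r : ℕ) - (p : ℕ) ∧ i = (p : ℕ) ∧ i' = (q : ℕ) then 16 else 0) +
         (if d = (r : ℕ) - (p : ℕ) ∧ i = (q : ℕ) ∧ i' = (p : ℕ) then 16 else 0))
      else 0 := by
  have hv1 : (p : ℕ) < (q : ℕ) := hpq
  have hv2 : (q : ℕ) < (r : ℕ) := hqr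
  have hv3 : (r : ℕ) < (s : ℕ) := hrs
  have hnp : p ∉ ({q, r, s} : Finset (Fin N)) := by
    simp only [Finset.mem_insert, Finset.mem_singleton]
    push_neg
    refine ⟨?_, ?_, ?_⟩ <;> (intro h; rw [Fin.ext_iff] at h; omega)
  have hnq : q ∉ ({r, s} : Finset (Fin N)) := by
    simp only [Finset.mem_insert, Finset.mem_singleton]
    push_neg
    refine ⟨?_, ?_⟩ <;> (intro h; rw [Fin.ext_iff] at h; omega)
  have hnr : r ∉ ({s} : Finset (Fin N)) := by
    simp only [Finset.mem_singleton]
    intro h; rw [Fin.ext_iff] at h; omega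
  rw [show ({p, q, r, s} : Finset (Fin N)) = insert p (insert q (insert r {s})) from rfl]
  rw [Finset.prod_insert hnp, Finset.prod_insert hnq, Finset.prod_insert hnr,
    Finset.prod_singleton]
  simp only [u_eq]
  -- column bound
  have col : ∀ x : ℕ, (if (p : ℕ) = x then 1 else 0) + (if (q : ℕ) = x then 1 else 0) +
      (if (r : ℕ) = x then 1 else 0) + (if (s : ℕ) = x then 1 else 0) ≤ 1 := by
    intro x; split_ifs <;> omega
  by_cases hodd : Odd (cnt4 i (i+d) i' (i'+d) (p : ℕ)) ∧ Odd (cnt4 i (i+d) i' (i'+d) (q : ℕ)) ∧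
      Odd (cnt4 i (i+d) i' (i'+d) (r : ℕ)) ∧ Odd (cnt4 i (i+d) i' (i'+d) (s : ℕ))
  · obtain ⟨⟨kp, hkp⟩, ⟨kq, hkq⟩, ⟨kr, hkr⟩, ⟨ks, hks⟩⟩ := hodd
    have hsum : cnt4 i (i+d) i' (i'+d) (p : ℕ) + cnt4 i (i+d) i' (i'+d) (q : ℕ) +
        cnt4 i (i+d) i' (i'+d) (r : ℕ) + cnt4 i (i+d) i' (i'+d) (s : ℕ) ≤ 4 := by
      have e : cnt4 i (i+d) i' (i'+d) (p : ℕ) + cnt4 i (i+d) i' (i'+d) (q : ℕ) +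
          cnt4 i (i+d) i' (i'+d) (r : ℕ) + cnt4 i (i+d) i' (i'+d) (s : ℕ)
          = ((if (p : ℕ) = i then 1 else 0) + (if (q : ℕ) = i then 1 else 0) +
             (if (r : ℕ) = i then 1 else 0) + (if (s : ℕ) = i then 1 else 0)) +
            ((if (p : ℕ) = i + d then 1 else 0) + (if (q : ℕ) = i + d then 1 else 0) +
             (if (r : ℕ) = i + d then 1 else 0) + (if (s : ℕ) = i + d then 1 else 0)) +
            ((if (p : ℕ) = i' then 1 else 0) + (if (q : ℕ) = i' then 1 else 0) +
             (if (r : ℕ) = i' then 1 else 0) + (if (s : ℕ) = i' then 1 else 0)) +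
            ((if (p : ℕ) = i' + d then 1 else 0) + (if (q : ℕ) = i' + d then 1 else 0) +
             (if (r : ℕ) = i' + d then 1 else 0) + (if (s : ℕ) = i' + d then 1 else 0)) := by
        simp only [cnt4]
        ring
      rw [e]
      have c1 := col i; have c2 := col (i + d); have c3 := col i'; have c4 := col (i' + d)
      omega
    have hp1 : cnt4 i (i+d) i' (i'+d) (p : ℕ) = 1 := by omega
    have hq1 : cnt4 i (i+d) i' (i'+d) (q : ℕ) = 1 := by omega
    have hr1 : cnt4 i (i+d) i' (i'+d) (r : ℕ) = 1 := by omega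
    have hs1 : cnt4 i (i+d) i' (i'+d) (s : ℕ) = 1 := by omega
    have mem : ∀ x : ℕ, cnt4 i (i+d) i' (i'+d) x = 1 →
        (x = i ∨ x = i + d ∨ x = i' ∨ x = i' + d) := by
      intro x hx
      by_contra h
      push_neg at h
      obtain ⟨h1, h2, h3, h4⟩ := h
      simp only [cnt4, if_neg h1, if_neg h2, if_neg h3, if_neg h4] at hx
      omega
    have Hp := mem _ hp1
    have Hq := mem _ hq1
    have Hr := mem _ hr1
    have Hs := mem _ hs1
    have hcond : (p : ℕ) + (s : ℕ) = (q : ℕ) + (r : ℕ) ∧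
        ((d = (q : ℕ) - (p : ℕ) ∧ i = (p : ℕ) ∧ i' = (r : ℕ)) ∨
         (d = (q : ℕ) - (p : ℕ) ∧ i = (r : ℕ) ∧ i' = (p : ℕ)) ∨
         (d = (r : ℕ) - (p : ℕ) ∧ i = (p : ℕ) ∧ i' = (q : ℕ)) ∨
         (d = (r : ℕ) - (p : ℕ) ∧ i = (q : ℕ) ∧ i' = (p : ℕ))) := by
      rcases Hp with h1 | h1 | h1 | h1 <;> rcases Hq with h2 | h2 | h2 | h2 <;>
        rcases Hr with h3 | h3 | h3 | h3 <;> rcases Hs with h4 | h4 | h4 | h4 <;> omega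
    rw [hp1, hq1, hr1, hs1, if_pos hcond.1]
    have e1 : (q : ℕ) - (p : ℕ) ≠ (r : ℕ) - (p : ℕ) := by omega
    rcases hcond.2 with h | h | h | h
    · rw [if_pos h, if_neg (by omega : ¬(d = (q : ℕ) - (p : ℕ) ∧ i = (r : ℕ) ∧ i' = (p : ℕ))),
        if_neg (by omega : ¬(d = (r : ℕ) - (p : ℕ) ∧ i = (p : ℕ) ∧ i' = (q : ℕ))),
        if_neg (by omega : ¬(d = (r : ℕ) - (p : ℕ) ∧ i = (q : ℕ) ∧ i' = (p : ℕ)))]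
      norm_num
    · rw [if_pos h, if_neg (by omega : ¬(d = (q : ℕ) - (p : ℕ) ∧ i = (p : ℕ) ∧ i' = (r : ℕ))),
        if_neg (by omega : ¬(d = (r : ℕ) - (p : ℕ) ∧ i = (p : ℕ) ∧ i' = (q : ℕ))),
        if_neg (by omega : ¬(d = (r : ℕ) - (p : ℕ) ∧ i = (q : ℕ) ∧ i' = (p : ℕ)))]
      norm_num
    · rw [if_pos h, if_neg (by omega : ¬(d = (q : ℕ) - (p : ℕ) ∧ i = (p : ℕ) ∧ i' = (r : ℕ))),
        if_neg (by omega : ¬(d = (q : ℕ) - (p : ℕ) ∧ i = (r : ℕ) ∧ i' = (p : ℕ))),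
        if_neg (by omega : ¬(d = (r : ℕ) - (p : ℕ) ∧ i = (q : ℕ) ∧ i' = (p : ℕ)))]
      norm_num
    · rw [if_pos h, if_neg (by omega : ¬(d = (q : ℕ) - (p : ℕ) ∧ i = (p : ℕ) ∧ i' = (r : ℕ))),
        if_neg (by omega : ¬(d = (q : ℕ) - (p : ℕ) ∧ i = (r : ℕ) ∧ i' = (p : ℕ))),
        if_neg (by omega : ¬(d = (r : ℕ) - (p : ℕ) ∧ i = (p : ℕ) ∧ i' = (q : ℕ)))]
      norm_num
  · rw [not_and_or, not_and_or, not_and_or] at hodd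
    have main : ∀ t : ℕ, ¬ Odd (cnt4 i (i+d) i' (i'+d) t) →
        ((-1 : ℝ) ^ (cnt4 i (i+d) i' (i'+d) t) - 1) = 0 := by
      intro t ht
      rw [Nat.not_odd_iff_even] at ht
      rw [ht.neg_one_pow]; ring
    have hrhs : ∀ t : Fin N, t = p ∨ t = q ∨ t = r ∨ t = s →
        ¬ Odd (cnt4 i (i+d) i' (i'+d) (t : ℕ)) →
        (if (p : ℕ) + (s : ℕ) = (q : ℕ) + (r : ℕ) then
          ((if d = (q : ℕ) - (p : ℕ) ∧ i = (p : ℕ) ∧ i' = (r : ℕ) then (16:ℝ) else 0) +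
           (if d = (q : ℕ) - (p : ℕ) ∧ i = (r : ℕ) ∧ i' = (p : ℕ) then 16 else 0) +
           (if d = (r : ℕ) - (p : ℕ) ∧ i = (p : ℕ) ∧ i' = (q : ℕ) then 16 else 0) +
           (if d = (r : ℕ) - (p : ℕ) ∧ i = (q : ℕ) ∧ i' = (p : ℕ) then 16 else 0))
        else 0) = 0 := by
      intro t htmem ht
      have hcnt1 : (p : ℕ) + (s : ℕ) = (q : ℕ) + (r : ℕ) →
          ((d = (q : ℕ) - (p : ℕ) ∧ i = (p : ℕ) ∧ i' = (r : ℕ)) ∨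
           (d = (q : ℕ) - (p : ℕ) ∧ i = (r : ℕ) ∧ i' = (p : ℕ)) ∨
           (d = (r : ℕ) - (p : ℕ) ∧ i = (p : ℕ) ∧ i' = (q : ℕ)) ∨
           (d = (r : ℕ) - (p : ℕ) ∧ i = (q : ℕ) ∧ i' = (p : ℕ))) →
          cnt4 i (i+d) i' (i'+d) (t : ℕ) = 1 := by
        intro h1 h2
        have htv : (t : ℕ) = (p : ℕ) ∨ (t : ℕ) = (q : ℕ) ∨ (t : ℕ) = (r : ℕ) ∨ (t : ℕ) = (s : ℕ) := by
          rcases htmem with rfl | rfl | rfl | rfl <;> simp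
        simp only [cnt4]
        split_ifs <;> omega
      by_cases h1 : (p : ℕ) + (s : ℕ) = (q : ℕ) + (r : ℕ)
      · have hno : ¬((d = (q : ℕ) - (p : ℕ) ∧ i = (p : ℕ) ∧ i' = (r : ℕ)) ∨
            (d = (q : ℕ) - (p : ℕ) ∧ i = (r : ℕ) ∧ i' = (p : ℕ)) ∨
            (d = (r : ℕ) - (p : ℕ) ∧ i = (p : ℕ) ∧ i' = (q : ℕ)) ∨
            (d = (r : ℕ) - (p : ℕ) ∧ i = (q : ℕ) ∧ i' = (p : ℕ))) := by
          intro hcontra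
          exact ht (by rw [hcnt1 h1 hcontra]; exact odd_one)
        rw [if_pos h1, if_neg (fun h => hno (Or.inl h)),
          if_neg (fun h => hno (Or.inr (Or.inl h))),
          if_neg (fun h => hno (Or.inr (Or.inr (Or.inl h)))),
          if_neg (fun h => hno (Or.inr (Or.inr (Or.inr h))))]
        norm_num
      · rw [if_neg h1]
    rcases hodd with hx | hx | hx | hx
    · rw [main _ hx]; simp only [zero_mul, mul_zero]
      exact (hrhs p (Or.inl rfl) hx).symm
    · rw [main _ hx]; simp only [zero_mul, mul_zero]
      exact (hrhs q (Or.inr (Or.inl rfl)) hx).symm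
    · rw [main _ hx]; simp only [zero_mul, mul_zero]
      exact (hrhs r (Or.inr (Or.inr (Or.inl rfl))) hx).symm
    · rw [main _ hx]; simp only [zero_mul, mul_zero]
      exact (hrhs s (Or.inr (Or.inr (Or.inr rfl))) hx).symm

private lemma triple_sum_indicator (N : ℕ) (d0 i0 i0' : ℕ) (hd0 : d0 ∈ Finset.Icc 1 (N-1))
    (hi0 : i0 ∈ Finset.range (N - d0)) (hi0' : i0' ∈ Finset.range (N - d0)) (v : ℝ) :
    ∑ d ∈ Finset.Icc 1 (N-1), ∑ i ∈ Finset.range (N-d), ∑ i' ∈ Finset.range (N-d),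
      (if d = d0 ∧ i = i0 ∧ i' = i0' then v else 0) = v := by
  rw [Finset.sum_eq_single_of_mem d0 hd0]
  · rw [Finset.sum_eq_single_of_mem i0 hi0]
    · rw [Finset.sum_eq_single_of_mem i0' hi0']
      · simp
      · intro b _ hb; simp [hb]
    · intro b _ hb; simp [hb]
  · intro b _ hb; simp [hb]

private lemma coeff_val {N : ℕ} (c : Finset (Fin N) → ℝ)
    (hc : ∀ x : Fin N → ℝ, IsBinary x →
      fbern N x = ∑ I : Finset (Fin N), c I * ∏ i ∈ I, x i)
    (p q r s : Fin N) (hpq : p < q) (hqr : q < r) (hrs : r < s) :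
    c {p, q, r, s} = if (p : ℕ) + (s : ℕ) = (q : ℕ) + (r : ℕ) then 64 else 0 := by
  have hv1 : (p : ℕ) < (q : ℕ) := hpq
  have hv2 : (q : ℕ) < (r : ℕ) := hqr
  have hv3 : (r : ℕ) < (s : ℕ) := hrs
  have hsN : (s : ℕ) < N := s.isLt
  have expand : ∀ J : Finset (Fin N), fbern N (chi J)
      = ∑ d ∈ Finset.Icc 1 (N-1), ∑ i ∈ Finset.range (N-d), ∑ i' ∈ Finset.range (N-d),
        ((2 * _root_.ext (chi J) i - 1) * (2 * _root_.ext (chi J) (i+d) - 1) *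
         ((2 * _root_.ext (chi J) i' - 1) * (2 * _root_.ext (chi J) (i'+d) - 1))) := by
    intro J
    unfold fbern
    refine Finset.sum_congr rfl fun d _ => ?_
    rw [sq, Finset.sum_mul_sum]
  calc c {p, q, r, s}
      = ∑ J ∈ ({p,q,r,s} : Finset (Fin N)).powerset,
          (-1 : ℝ) ^ ((({p,q,r,s} : Finset (Fin N)) \ J).card) * fbern N (chi J) :=
        inversion c hc _
    _ = ∑ J ∈ ({p,q,r,s} : Finset (Fin N)).powerset, ∑ d ∈ Finset.Icc 1 (N-1),
          ∑ i ∈ Finset.range (N-d), ∑ i' ∈ Finset.range (N-d),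
          (-1 : ℝ) ^ ((({p,q,r,s} : Finset (Fin N)) \ J).card) *
          ((2 * _root_.ext (chi J) i - 1) * (2 * _root_.ext (chi J) (i+d) - 1) *
           ((2 * _root_.ext (chi J) i' - 1) * (2 * _root_.ext (chi J) (i'+d) - 1))) := by
        refine Finset.sum_congr rfl fun J _ => ?_
        rw [expand J, Finset.mul_sum]
        refine Finset.sum_congr rfl fun d _ => ?_
        rw [Finset.mul_sum]
        refine Finset.sum_congr rfl fun i _ => ?_
        rw [Finset.mul_sum]
    _ = ∑ d ∈ Finset.Icc 1 (N-1), ∑ i ∈ Finset.range (N-d), ∑ i' ∈ Finset.range (N-d),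
          ∑ J ∈ ({p,q,r,s} : Finset (Fin N)).powerset,
          (-1 : ℝ) ^ ((({p,q,r,s} : Finset (Fin N)) \ J).card) *
          ((2 * _root_.ext (chi J) i - 1) * (2 * _root_.ext (chi J) (i+d) - 1) *
           ((2 * _root_.ext (chi J) i' - 1) * (2 * _root_.ext (chi J) (i'+d) - 1))) := by
        rw [Finset.sum_comm]
        refine Finset.sum_congr rfl fun d _ => ?_
        rw [Finset.sum_comm]
        refine Finset.sum_congr rfl fun i _ => ?_
        rw [Finset.sum_comm]
    _ = ∑ d ∈ Finset.Icc 1 (N-1), ∑ i ∈ Finset.range (N-d), ∑ i' ∈ Finset.range (N-d),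
          (if (p : ℕ) + (s : ℕ) = (q : ℕ) + (r : ℕ) then
            ((if d = (q : ℕ) - (p : ℕ) ∧ i = (p : ℕ) ∧ i' = (r : ℕ) then (16:ℝ) else 0) +
             (if d = (q : ℕ) - (p : ℕ) ∧ i = (r : ℕ) ∧ i' = (p : ℕ) then 16 else 0) +
             (if d = (r : ℕ) - (p : ℕ) ∧ i = (p : ℕ) ∧ i' = (q : ℕ) then 16 else 0) +
             (if d = (r : ℕ) - (p : ℕ) ∧ i = (q : ℕ) ∧ i' = (p : ℕ) then 16 else 0))
          else 0) := by
        refine Finset.sum_congr rfl fun d hd => Finset.sum_congr rfl fun i hi =>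
          Finset.sum_congr rfl fun i' hi' => ?_
        rw [Finset.mem_Icc] at hd
        rw [Finset.mem_range] at hi hi'
        have h1 : i + d < N := by omega
        have h2 : i' + d < N := by omega
        rw [A_eval _ i (i+d) i' (i'+d) (by omega) h1 (by omega) h2]
        exact classify p q r s hpq hqr hrs d i i' (by omega) h1 h2
    _ = if (p : ℕ) + (s : ℕ) = (q : ℕ) + (r : ℕ) then 64 else 0 := by
        by_cases hps : (p : ℕ) + (s : ℕ) = (q : ℕ) + (r : ℕ)
        · simp only [if_pos hps]
          rw [show (64:ℝ) = 16 + 16 + 16 + 16 by norm_num]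
          have m1d : (q : ℕ) - (p : ℕ) ∈ Finset.Icc 1 (N-1) := by
            rw [Finset.mem_Icc]; omega
          have m2d : (r : ℕ) - (p : ℕ) ∈ Finset.Icc 1 (N-1) := by
            rw [Finset.mem_Icc]; omega
          have m1i : (p : ℕ) ∈ Finset.range (N - ((q:ℕ) - (p:ℕ))) := by
            rw [Finset.mem_range]; omega
          have m1i' : (r : ℕ) ∈ Finset.range (N - ((q:ℕ) - (p:ℕ))) := by
            rw [Finset.mem_range]; omega
          have m2i : (p : ℕ) ∈ Finset.range (N - ((r:ℕ) - (p:ℕ))) := by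
            rw [Finset.mem_range]; omega
          have m2i' : (q : ℕ) ∈ Finset.range (N - ((r:ℕ) - (p:ℕ))) := by
            rw [Finset.mem_range]; omega
          simp only [Finset.sum_add_distrib]
          rw [triple_sum_indicator N _ _ _ m1d m1i m1i' 16,
            triple_sum_indicator N _ _ _ m1d m1i' m1i 16,
            triple_sum_indicator N _ _ _ m2d m2i m2i' 16,
            triple_sum_indicator N _ _ _ m2d m2i' m2i 16]
        · simp only [if_neg hps]
          simp

private theorem gq_upper (N : ℕ) (hN : 3 ≤ N) : (goodQuads N).card ≤ N ^ 3 := by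
  have h := Finset.card_le_card_of_injOn
    (f := fun t : Fin N × Fin N × Fin N × Fin N => (t.1, t.2.1, t.2.2.1))
    (s := goodQuads N) (t := Finset.univ) (fun a _ => Finset.mem_univ _) ?_
  · calc (goodQuads N).card ≤ (Finset.univ : Finset (Fin N × Fin N × Fin N)).card := h
      _ = N ^ 3 := by simp [Finset.card_univ]; ring
  · rintro ⟨a1, a2, a3, a4⟩ ha ⟨b1, b2, b3, b4⟩ hb hab
    simp only [goodQuads, Finset.mem_coe, Finset.mem_filter] at ha hb
    simp only [Prod.mk.injEq] at hab ⊢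
    obtain ⟨h1, h2, h3⟩ := hab
    subst h1; subst h2; subst h3
    refine ⟨rfl, rfl, rfl, ?_⟩
    have := ha.2.2.2.2; have := hb.2.2.2.2
    exact Fin.ext (by omega)

private theorem gq_lower (N : ℕ) (hN : 3 ≤ N) :
    (N / 4) * (N / 4) * (N / 4 - 1) ≤ (goodQuads N).card := by
  set m := N / 4 with hm
  have h4m : 4 * m ≤ N := by omega
  have hNpos : 0 < N := by omega
  have h := Finset.card_le_card_of_injOn
    (f := fun t : ℕ × ℕ × ℕ =>
      ((⟨t.1 % N, Nat.mod_lt _ hNpos⟩ : Fin N), (⟨(t.1 + t.2.1) % N, Nat.mod_lt _ hNpos⟩ : Fin N),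
       (⟨(t.1 + t.2.1 + t.2.2) % N, Nat.mod_lt _ hNpos⟩ : Fin N),
       (⟨(t.1 + 2*t.2.1 + t.2.2) % N, Nat.mod_lt _ hNpos⟩ : Fin N)))
    (s := (Finset.range m) ×ˢ (Finset.Icc 1 m) ×ˢ (Finset.Icc 1 (m-1))) (t := goodQuads N) ?_ ?_
  · calc m * m * (m-1) = ((Finset.range m) ×ˢ (Finset.Icc 1 m) ×ˢ (Finset.Icc 1 (m-1))).card := by
          simp [Finset.card_product]; ring
      _ ≤ _ := h
  · rintro ⟨p, a, b⟩ hmem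
    simp only [Finset.mem_coe, Finset.mem_product, Finset.mem_range, Finset.mem_Icc] at hmem
    obtain ⟨h1, ⟨h2, h3⟩, h4, h5⟩ := hmem
    have e1 : p % N = p := Nat.mod_eq_of_lt (by omega)
    have e2 : (p + a) % N = p + a := Nat.mod_eq_of_lt (by omega)
    have e3 : (p + a + b) % N = p + a + b := Nat.mod_eq_of_lt (by omega)
    have e4 : (p + 2*a + b) % N = p + 2*a + b := Nat.mod_eq_of_lt (by omega)
    simp only [Finset.mem_coe, goodQuads, Finset.mem_filter, Finset.mem_univ, true_and, Fin.mk_lt_mk, e1, e2, e3, e4]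
    omega
  · rintro ⟨p, a, b⟩ hmem ⟨p', a', b'⟩ hmem' heq
    simp only [Finset.mem_coe, Finset.mem_product, Finset.mem_range, Finset.mem_Icc] at hmem hmem'
    obtain ⟨h1, ⟨h2, h3⟩, h4, h5⟩ := hmem
    obtain ⟨h1', ⟨h2', h3'⟩, h4', h5'⟩ := hmem'
    simp only [Prod.mk.injEq, Fin.mk.injEq] at heq
    have e1 : p % N = p := Nat.mod_eq_of_lt (by omega)
    have e2 : (p + a) % N = p + a := Nat.mod_eq_of_lt (by omega)
    have e3 : (p + a + b) % N = p + a + b := Nat.mod_eq_of_lt (by omega)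
    have e1' : p' % N = p' := Nat.mod_eq_of_lt (by omega)
    have e2' : (p' + a') % N = p' + a' := Nat.mod_eq_of_lt (by omega)
    have e3' : (p' + a' + b') % N = p' + a' + b' := Nat.mod_eq_of_lt (by omega)
    rw [e1, e2, e3, e1', e2', e3'] at heq
    simp only [Prod.mk.injEq]
    omega


theorem bernasconi_degree_four_monomials (N : ℕ) (hN : 3 ≤ N)
    (c : Finset (Fin N) → ℝ)
    (hc : ∀ x : Fin N → ℝ, IsBinary x →
      fbern N x = ∑ I : Finset (Fin N), c I * ∏ i ∈ I, x i) :
    (∀ p q r s : Fin N, p < q → q < r → r < s →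
      (c {p, q, r, s} ≠ 0 ↔ (p : ℕ) + (s : ℕ) = (q : ℕ) + (r : ℕ))) ∧
    (N / 4) * (N / 4) * (N / 4 - 1) ≤ (goodQuads N).card ∧
    (goodQuads N).card ≤ N ^ 3 := by
  refine ⟨?_, gq_lower N hN, gq_upper N hN⟩
  intro p q r s hpq hqr hrs
  rw [coeff_val c hc p q r s hpq hqr hrs]
  split_ifs with h
  · simp only [h, iff_true]
    norm_num
  · simp [h]
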